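/- arXiv:1010.3216 — 5 statements merged into one kernel-verified Lean document; each statement's English description precedes it below -/
import Mathlib

section
/- Let τ₀ ∈ ℝ, let B > 1, B̃ ≥ 1 and D ≥ 0 be real constants, and let λ be a real number with 0 < λ < 1/(16·B²). Let f : [τ₀, ∞) → ℝ be continuous and nonnegative, and suppose that for all τ₀ ≤ τ₁ ≤ τ₂ one has f(τ₂) + ∫_{τ₁}^{τ₂} f(t) dt ≤ B̃·(D + f(τ₀))·max(1, τ₂ − τ₁) + λ·max(1, τ₂ − τ₁)·sup_{τ ∈ [τ₁, τ₂]} f(τ) + B·f(τ₁). Then sup_{τ ≥ τ₀} f(τ) ≤ C, where C = 2·B·f(τ₀) + 72·B²·B̃·(D + f(τ₀)). -/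
open scoped BigOperators

/-- **Boundedness bootstrap lemma** (Lemma 10.2 of the paper).
If a continuous nonnegative energy `f` satisfies, on every interval
`[τ₁, τ₂] ⊆ [τ₀, ∞)`, an estimate whose right hand side grows linearly in the
interval length and contains a small multiple of the supremum of the energy,
then `f` is uniformly bounded by
`C = 2·B·f(τ₀) + 72·B²·B̃·(D + f(τ₀))`. -/
theorem boundedness_bootstrap
    (τ₀ B Btil D lam : ℝ)
    (hB : 1 < B) (hBtil : 1 ≤ Btil) (hD : 0 ≤ D)
    (hlam0 : 0 < lam) (hlam : lam < 1 / (16 * B ^ 2))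
    (f : ℝ → ℝ)
    (hf_cont : ContinuousOn f (Set.Ici τ₀))
    (hf_nonneg : ∀ τ ∈ Set.Ici τ₀, 0 ≤ f τ)
    (hest : ∀ τ₁ τ₂, τ₀ ≤ τ₁ → τ₁ ≤ τ₂ →
      f τ₂ + ∫ t in τ₁..τ₂, f t ≤
        Btil * (D + f τ₀) * max 1 (τ₂ - τ₁)
          + lam * max 1 (τ₂ - τ₁) * sSup (f '' Set.Icc τ₁ τ₂)
          + B * f τ₁) :
    ∀ τ, τ₀ ≤ τ → f τ ≤ 2 * B * f τ₀ + 72 * B ^ 2 * Btil * (D + f τ₀) := by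
  intro τ hτ
  have hB0 : (0:ℝ) < B := lt_trans one_pos hB
  have hB2 : (1:ℝ) < B ^ 2 := by nlinarith
  have hf0 : 0 ≤ f τ₀ := hf_nonneg τ₀ Set.self_mem_Ici
  set A := Btil * (D + f τ₀) with hA_def
  have hA : 0 ≤ A := mul_nonneg (le_trans zero_le_one hBtil) (add_nonneg hD hf0)
  set L := 8 * B ^ 2 with hL_def
  have hL1 : (1:ℝ) ≤ L := by nlinarith
  have hlamL : lam * L ≤ 1 / 2 := by
    have h16 : (0:ℝ) < 16 * B ^ 2 := by positivity
    rw [lt_div_iff₀ h16] at hlam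
    nlinarith
  obtain ⟨τs, hτsmem, hmax⟩ := (isCompact_Icc (a := τ₀) (b := τ)).exists_isMaxOn
    ⟨τ₀, le_rfl, hτ⟩ (hf_cont.mono Set.Icc_subset_Ici_self)
  obtain ⟨hτs0, hτsτ⟩ := hτsmem
  set M := f τs with hM_def
  have hM0 : 0 ≤ M := hf_nonneg τs hτs0
  have hfτM : f τ ≤ M := hmax ⟨hτ, le_rfl⟩
  have hsup : ∀ a b, τ₀ ≤ a → a ≤ b → b ≤ τ → sSup (f '' Set.Icc a b) ≤ M := by
    intro a b ha hab hb
    apply csSup_le ((Set.nonempty_Icc.2 hab).image f)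
    rintro y ⟨x, hx, rfl⟩
    exact hmax ⟨ha.trans hx.1, hx.2.trans hb⟩
  have hgoal_eq : 2 * B * f τ₀ + 72 * B ^ 2 * Btil * (D + f τ₀)
      = 2 * B * f τ₀ + 9 * (L * A) := by rw [hA_def, hL_def]; ring
  have hLA : 0 ≤ L * A := mul_nonneg (by positivity) hA
  have hBf0 : 0 ≤ B * f τ₀ := mul_nonneg hB0.le hf0
  have key : M ≤ 2 * B * f τ₀ + 72 * B ^ 2 * Btil * (D + f τ₀) := by
    rw [hgoal_eq]
    rcases le_or_gt (τs - τ₀) L with hcase | hcase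
    · -- Case 1 : τs is close to τ₀
      have h := hest τ₀ τs le_rfl hτs0
      have hI : 0 ≤ ∫ t in τ₀..τs, f t :=
        intervalIntegral.integral_nonneg hτs0 (fun u hu => hf_nonneg u hu.1)
      have hmax1 : max 1 (τs - τ₀) ≤ L := max_le hL1 hcase
      have hS : sSup (f '' Set.Icc τ₀ τs) ≤ M := hsup τ₀ τs le_rfl hτs0 hτsτ
      have h1 : A * max 1 (τs - τ₀) ≤ A * L := mul_le_mul_of_nonneg_left hmax1 hA
      have h2 : lam * max 1 (τs - τ₀) * sSup (f '' Set.Icc τ₀ τs) ≤ lam * L * M := by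
        have e1 : lam * max 1 (τs - τ₀) * sSup (f '' Set.Icc τ₀ τs)
            ≤ lam * max 1 (τs - τ₀) * M :=
          mul_le_mul_of_nonneg_left hS (by positivity)
        have e2 : lam * max 1 (τs - τ₀) * M ≤ lam * L * M :=
          mul_le_mul_of_nonneg_right (mul_le_mul_of_nonneg_left hmax1 hlam0.le) hM0
        exact e1.trans e2
      have h3 : lam * L * M ≤ (1 / 2) * M := mul_le_mul_of_nonneg_right hlamL hM0
      -- M ≤ L*A + M/2 + B*f τ₀
      nlinarith
    · -- Case 2 : τs is far from τ₀
      set σ := τs - L with hσ_def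
      have hσ0 : τ₀ ≤ σ := by simp only [hσ_def]; linarith
      have hστs : σ ≤ τs := by simp only [hσ_def]; linarith
      obtain ⟨s, hsmem, hmin⟩ := (isCompact_Icc (a := σ) (b := τs)).exists_isMinOn
        ⟨σ, le_rfl, hστs⟩ (hf_cont.mono (fun x hx => le_trans hσ0 hx.1))
      have hs0 : τ₀ ≤ s := hσ0.trans hsmem.1
      have hsτs : s ≤ τs := hsmem.2
      rcases lt_or_ge (f s) (M / (4 * B)) with h2a | h2b
      · -- an interior point where f is small
        have h := hest s τs hs0 hsτs
        have hI : 0 ≤ ∫ t in s..τs, f t :=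
          intervalIntegral.integral_nonneg hsτs (fun u hu => hf_nonneg u ((hs0.trans hu.1)))
        have hmax1 : max 1 (τs - s) ≤ L := max_le hL1 (by linarith [hsmem.1])
        have hS : sSup (f '' Set.Icc s τs) ≤ M := hsup s τs hs0 hsτs hτsτ
        have h1 : A * max 1 (τs - s) ≤ A * L := mul_le_mul_of_nonneg_left hmax1 hA
        have h2 : lam * max 1 (τs - s) * sSup (f '' Set.Icc s τs) ≤ lam * L * M := by
          have e1 : lam * max 1 (τs - s) * sSup (f '' Set.Icc s τs)
              ≤ lam * max 1 (τs - s) * M :=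
            mul_le_mul_of_nonneg_left hS (by positivity)
          have e2 : lam * max 1 (τs - s) * M ≤ lam * L * M :=
            mul_le_mul_of_nonneg_right (mul_le_mul_of_nonneg_left hmax1 hlam0.le) hM0
          exact e1.trans e2
        have h3 : lam * L * M ≤ (1 / 2) * M := mul_le_mul_of_nonneg_right hlamL hM0
        have h4 : B * f s ≤ B * (M / (4 * B)) := mul_le_mul_of_nonneg_left h2a.le hB0.le
        have h5 : B * (M / (4 * B)) = M / 4 := by field_simp
        -- M ≤ L*A + M/2 + M/4
        nlinarith
      · -- f stays large on [σ, τs], use the integral term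
        have h := hest σ τs hσ0 hστs
        have hint : IntervalIntegrable f MeasureTheory.volume σ τs := by
          apply ContinuousOn.intervalIntegrable
          apply hf_cont.mono
          intro x hx
          rw [Set.uIcc_of_le hστs] at hx
          exact le_trans hσ0 hx.1
        have hlow : (τs - σ) * (M / (4 * B)) ≤ ∫ t in σ..τs, f t := by
          have hmono := intervalIntegral.integral_mono_on hστs
            (intervalIntegrable_const (c := M / (4 * B))) hint
            (fun x hx => h2b.trans (hmin hx))
          rw [intervalIntegral.integral_const, smul_eq_mul] at hmono
          linarith
        have hτσ : τs - σ = L := by simp [hσ_def]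
        have hmax1 : max 1 (τs - σ) = L := by rw [hτσ]; exact max_eq_right hL1
        have hfσ : f σ ≤ M := hmax ⟨hσ0, hστs.trans hτsτ⟩
        have hS : sSup (f '' Set.Icc σ τs) ≤ M := hsup σ τs hσ0 hστs hτsτ
        rw [hτσ] at hlow
        rw [hmax1] at h
        have h2 : lam * L * sSup (f '' Set.Icc σ τs) ≤ lam * L * M :=
          mul_le_mul_of_nonneg_left hS (by positivity)
        have h3 : lam * L * M ≤ (1 / 2) * M := mul_le_mul_of_nonneg_right hlamL hM0
        have hLM : L * (M / (4 * B)) = 2 * B * M := by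
          rw [hL_def]; field_simp; ring
        rw [hLM] at hlow
        have h4 : B * f σ ≤ B * M := mul_le_mul_of_nonneg_left hfσ hB0.le
        -- M + 2BM ≤ A*L + M/2 + B*M  ⟹  M ≤ L*A
        have hBM : M ≤ B * M := le_mul_of_one_le_left hM0 hB.le
        linarith
  exact hfτM.trans key
end

section
/- Let τ₀ > 0 and C ≥ 1. Let f : [τ₀, ∞) → ℝ be continuous and nonnegative, and suppose that for all τ₀ ≤ τ₁ ≤ τ₂ one has f(τ₂) + ∫_{τ₁}^{τ₂} f(t) dt ≤ C·f(τ₁). Then for every τ ≥ 2·τ₀ one has f(τ) ≤ 2·C³·f(τ₀)/τ. -/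
open scoped BigOperators

/-- **Pigeonhole decay mechanism** (used in the paper in the passage from the
combined boundedness and integrated-decay estimate (13.2) to the decay
statement (14.6)): if a continuous nonnegative energy `f` satisfies
`f(τ₂) + ∫_{τ₁}^{τ₂} f ≤ C·f(τ₁)` for all `τ₀ ≤ τ₁ ≤ τ₂`, then
`f(τ) ≤ 2·C³·f(τ₀)/τ` for all `τ ≥ 2·τ₀`. -/
theorem pigeonhole_decay
    (τ₀ C : ℝ) (hτ₀ : 0 < τ₀) (hC : 1 ≤ C)
    (f : ℝ → ℝ)
    (hf_cont : ContinuousOn f (Set.Ici τ₀))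
    (hf_nonneg : ∀ τ ∈ Set.Ici τ₀, 0 ≤ f τ)
    (hest : ∀ τ₁ τ₂, τ₀ ≤ τ₁ → τ₁ ≤ τ₂ →
      f τ₂ + ∫ t in τ₁..τ₂, f t ≤ C * f τ₁) :
    ∀ τ, 2 * τ₀ ≤ τ → f τ ≤ 2 * C ^ 3 * f τ₀ / τ := by
  intro τ hτ
  have hτpos : 0 < τ := by linarith
  have h2 : τ₀ ≤ τ / 2 := by linarith
  have hhalf : τ / 2 ≤ τ := by linarith
  obtain ⟨τs, hτsmem, hmin⟩ :=
    (isCompact_Icc (a := τ/2) (b := τ)).exists_isMinOn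
      (Set.nonempty_Icc.2 hhalf)
      (hf_cont.mono (fun x hx => le_trans h2 hx.1))
  have hτs1 : τ/2 ≤ τs := hτsmem.1
  have hτs2 : τs ≤ τ := hτsmem.2
  have hτ₀τs : τ₀ ≤ τs := le_trans h2 hτs1
  have hint : IntervalIntegrable f MeasureTheory.volume (τ/2) τ :=
    (hf_cont.mono (by intro x hx; rw [Set.uIcc_of_le hhalf] at hx
                      exact le_trans h2 hx.1)).intervalIntegrable
  have hlow : (τ - τ/2) * f τs ≤ ∫ t in (τ/2)..τ, f t := by
    have h := intervalIntegral.integral_mono_on hhalf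
      (intervalIntegrable_const (c := f τs)) hint
      (fun x hx => hmin hx)
    simpa [smul_eq_mul] using h
  have hub : ∫ t in (τ/2)..τ, f t ≤ C^2 * f τ₀ := by
    have h1 := hest (τ/2) τ h2 hhalf
    have h2' := hest τ₀ (τ/2) le_rfl h2
    have hfτ : 0 ≤ f τ := hf_nonneg τ (by simp only [Set.mem_Ici]; linarith)
    have hintnn : 0 ≤ ∫ t in τ₀..(τ/2), f t :=
      intervalIntegral.integral_nonneg h2 (fun x hx => hf_nonneg x hx.1)
    have hf0 : 0 ≤ f τ₀ := hf_nonneg τ₀ Set.self_mem_Ici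
    nlinarith
  have hstep : f τ ≤ C * f τs := by
    have h3 := hest τs τ hτ₀τs hτs2
    have hnn : 0 ≤ ∫ t in τs..τ, f t :=
      intervalIntegral.integral_nonneg hτs2
        (fun x hx => hf_nonneg x (le_trans hτ₀τs hx.1))
    linarith
  have hfτs : f τs ≤ 2 * C^2 * f τ₀ / τ := by
    rw [le_div_iff₀ hτpos]
    nlinarith
  calc f τ ≤ C * f τs := hstep
    _ ≤ C * (2 * C^2 * f τ₀ / τ) :=
        mul_le_mul_of_nonneg_left hfτs (by linarith)
    _ = 2 * C ^ 3 * f τ₀ / τ := by ring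
end

section
/- Let τ₀ > 0, C ≥ 1 and m ≥ 1 a natural number. Let f₀, f₁, …, f_m : [τ₀, ∞) → ℝ be continuous and nonnegative and suppose: (i) for every j ∈ {0, …, m} and all τ₀ ≤ τ₁ ≤ τ₂ one has f_j(τ₂) ≤ C·f_j(τ₁); and (ii) for every j ∈ {1, …, m} and all τ₀ ≤ τ₁ ≤ τ₂ one has ∫_{τ₁}^{τ₂} f_j(t) dt ≤ C·f_{j−1}(τ₁). Then for every τ ≥ 2^m·τ₀ one has f_m(τ) ≤ 2^{m(m+1)/2}·C^{2m+1}·f₀(τ₀)·τ^{−m}. -/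
open scoped BigOperators

/-- **Decay iteration mechanism** (the abstract mechanism behind Theorem 5.3 of
the paper): a hierarchy of continuous nonnegative energies `f 0, …, f m` in
which each energy is uniformly bounded forward in time (up to a factor `C`)
and the time-integrated energy at each level `j ≥ 1` is controlled by the
boundary energy one level lower, yields the polynomial decay
`f m (τ) ≤ 2^{m(m+1)/2}·C^{2m+1}·f 0 (τ₀)·τ^{−m}` for `τ ≥ 2^m·τ₀`. -/
theorem decay_iteration
    (τ₀ C : ℝ) (hτ₀ : 0 < τ₀) (hC : 1 ≤ C)
    (m : ℕ) (hm : 1 ≤ m)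
    (f : ℕ → ℝ → ℝ)
    (hf_cont : ∀ j ≤ m, ContinuousOn (f j) (Set.Ici τ₀))
    (hf_nonneg : ∀ j ≤ m, ∀ τ ∈ Set.Ici τ₀, 0 ≤ f j τ)
    (hbound : ∀ j ≤ m, ∀ τ₁ τ₂, τ₀ ≤ τ₁ → τ₁ ≤ τ₂ → f j τ₂ ≤ C * f j τ₁)
    (hint : ∀ j, 1 ≤ j → j ≤ m → ∀ τ₁ τ₂, τ₀ ≤ τ₁ → τ₁ ≤ τ₂ →
      (∫ t in τ₁..τ₂, f j t) ≤ C * f (j - 1) τ₁) :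
    ∀ τ, 2 ^ m * τ₀ ≤ τ →
      f m τ ≤ 2 ^ (m * (m + 1) / 2) * C ^ (2 * m + 1) * f 0 τ₀ / τ ^ m := by
  have hC0 : (0:ℝ) < C := lt_of_lt_of_le one_pos hC
  have key : ∀ j, j ≤ m → ∀ τ, 2 ^ j * τ₀ ≤ τ →
      f j τ ≤ 2 ^ (j * (j + 1) / 2) * C ^ (2 * j + 1) * f 0 τ₀ / τ ^ j := by
    intro j
    induction j with
    | zero =>
      intro _ τ hτ
      simp only [pow_zero, one_mul, Nat.zero_mul, Nat.zero_div, mul_zero, zero_add,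
        pow_one, div_one] at hτ ⊢
      exact hbound 0 (Nat.zero_le m) τ₀ τ le_rfl hτ
    | succ j ih =>
      intro hjm τ hτ
      have hjm' : j ≤ m := Nat.le_of_succ_le hjm
      have h2j : (1:ℝ) ≤ 2 ^ j := one_le_pow₀ (by norm_num : (1:ℝ) ≤ 2)
      have hτpos : 0 < τ := lt_of_lt_of_le (by positivity) hτ
      set a := τ / 2 with ha
      have ha2 : 2 ^ j * τ₀ ≤ a := by
        rw [ha, le_div_iff₀ (by norm_num : (0:ℝ) < 2)]
        calc 2 ^ j * τ₀ * 2 = 2 ^ (j+1) * τ₀ := by ring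
          _ ≤ τ := hτ
      have hτ₀a : τ₀ ≤ a :=
        le_trans (le_mul_of_one_le_left hτ₀.le h2j) ha2
      have hapos : 0 < a := lt_of_lt_of_le hτ₀ hτ₀a
      have haτ : a ≤ τ := by rw [ha]; linarith
      have hta : 0 < τ - a := by rw [ha]; linarith
      have hcont : ContinuousOn (f (j+1)) (Set.Icc a τ) :=
        (hf_cont (j+1) hjm).mono (fun x hx => le_trans hτ₀a hx.1)
      obtain ⟨x, hx, hmin⟩ :=
        isCompact_Icc.exists_isMinOn (Set.nonempty_Icc.mpr haτ) hcont
      have hInt : IntervalIntegrable (f (j+1)) MeasureTheory.volume a τ :=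
        hcont.intervalIntegrable_of_Icc haτ
      have h1 : (τ - a) * f (j+1) x ≤ ∫ t in a..τ, f (j+1) t := by
        have := intervalIntegral.integral_mono_on haτ intervalIntegrable_const hInt
          (fun t ht => hmin ht)
        simpa [intervalIntegral.integral_const, smul_eq_mul] using this
      have h2 : (∫ t in a..τ, f (j+1) t) ≤ C * f j a := by
        simpa using hint (j+1) (Nat.le_add_left 1 j) hjm a τ hτ₀a haτ
      have h3 : f (j+1) τ ≤ C * f (j+1) x :=
        hbound (j+1) hjm x τ (le_trans hτ₀a hx.1) hx.2
      have h4 : f j a ≤ 2 ^ (j * (j + 1) / 2) * C ^ (2 * j + 1) * f 0 τ₀ / a ^ j :=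
        ih hjm' a ha2
      have h5 : f (j+1) x ≤ C * f j a / (τ - a) := by
        rw [le_div_iff₀ hta]
        nlinarith [h1.trans h2]
      have h6 : f (j+1) τ ≤ C * (C * f j a / (τ - a)) :=
        h3.trans (mul_le_mul_of_nonneg_left h5 hC0.le)
      have h7 : C * (C * f j a / (τ - a)) ≤
          C * (C * (2 ^ (j * (j + 1) / 2) * C ^ (2 * j + 1) * f 0 τ₀ / a ^ j) / (τ - a)) := by
        gcongr
      refine h6.trans (h7.trans (le_of_eq ?_))
      have hTj : (2:ℝ) ^ ((j+1) * (j+1+1) / 2) = 2 ^ (j * (j + 1) / 2) * 2 ^ (j+1) := by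
        rw [← pow_add]
        congr 1
        obtain ⟨k, hk⟩ := Nat.even_mul_succ_self j
        have e1 : j*(j+1) = 2*k := by rw [hk]; ring
        have e2 : (j+1)*(j+1+1) = 2*(k+(j+1)) := by
          rw [show (j+1)*(j+1+1) = j*(j+1) + 2*(j+1) by ring, hk]; ring
        rw [e1, e2]; omega
      have hCe : C ^ (2 * (j+1) + 1) = C ^ (2 * j + 1) * C ^ 2 := by
        rw [← pow_add]
        congr 1
      have hta' : τ - a = τ / 2 := by rw [ha]; ring
      rw [hTj, hCe, hta', ha]
      have h2jne : ((2:ℝ) ^ j) ≠ 0 := by positivity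
      field_simp
      have h12 : ((1:ℝ)/2)^j * 2^j = 1 := by rw [← mul_pow]; norm_num
      linear_combination (-(f 0 τ₀ * τ * τ ^ j * 2)) * h12
  exact key m le_rfl
end

section
/- Let F be an antisymmetric bilinear form on Minkowski space with energy–momentum tensor Q̃[F]_{αβ} = F_{αγ}·F_β^{γ} + (⋆F)_{αγ}·(⋆F)_β^{γ}. Then for all future-directed causal vectors X, Y ∈ ℝ⁴ one has Q̃[F](X, Y) = Q̃[F]_{αβ}·X^α·Y^β ≥ 0. Moreover, if X and Y are future-directed timelike, there exists a constant c > 0 (depending only on X and Y) such that Q̃[F'](X, Y) ≥ c·Σ_{α,β} (F'_{αβ})² for every antisymmetric bilinear form F'. -/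
open scoped BigOperators

namespace Paper

noncomputable section

/-- The Minkowski metric `η = diag(-1,1,1,1)` on `ℝ⁴ = (Fin 4 → ℝ)`.
Since `η` is diagonal with entries `±1`, the inverse metric `η^{μν}` has the
same components, so `η` is also used for raising indices. -/
def η (μ ν : Fin 4) : ℝ := if μ = ν then (if μ = 0 then (-1 : ℝ) else 1) else 0

/-- The Levi-Civita tensor on `Fin 4`: totally antisymmetric with
`ε 0 1 2 3 = 1` (the Vandermonde product of the indices, normalized). -/
def ε (a b c d : Fin 4) : ℝ :=
  (((b.val : ℝ) - (a.val : ℝ)) * ((c.val : ℝ) - (a.val : ℝ)) *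
    ((d.val : ℝ) - (a.val : ℝ)) * ((c.val : ℝ) - (b.val : ℝ)) *
    ((d.val : ℝ) - (b.val : ℝ)) * ((d.val : ℝ) - (c.val : ℝ))) / 12

/-- A 4-index array of reals. -/
abbrev Tensor4 := Fin 4 → Fin 4 → Fin 4 → Fin 4 → ℝ

/-- A Weyl tensor: antisymmetric in the first and second pairs of indices,
symmetric under exchange of the pairs, satisfying the first Bianchi identity,
and trace-free with respect to `η` (i.e. `η^{αγ} W_{αβγδ} = 0`). -/
def IsWeyl (W : Tensor4) : Prop :=
  (∀ a b c d, W a b c d = - W b a c d) ∧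
  (∀ a b c d, W a b c d = - W a b d c) ∧
  (∀ a b c d, W a b c d = W c d a b) ∧
  (∀ a b c d, W a b c d + W a c d b + W a d b c = 0) ∧
  (∀ b d, (∑ a : Fin 4, ∑ c : Fin 4, η a c * W a b c d) = 0)

/-- The left dual `(⋆W)_{αβγδ} = (1/2)·ε_{αβ}^{μν}·W_{μνγδ}`,
indices raised with `η`. -/
def starW (W : Tensor4) : Tensor4 := fun a b c d =>
  (1 / 2) * ∑ μ : Fin 4, ∑ ν : Fin 4, ∑ μ' : Fin 4, ∑ ν' : Fin 4,
    ε a b μ' ν' * η μ' μ * η ν' ν * W μ ν c d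

/-- The Bel–Robinson tensor
`Q[W]_{αβγδ} = W_{αργσ}·W_β{}^ρ{}_δ{}^σ + (⋆W)_{αργσ}·(⋆W)_β{}^ρ{}_δ{}^σ`. -/
def Q (W : Tensor4) : Tensor4 := fun a b c d =>
  ∑ ρ : Fin 4, ∑ σ : Fin 4, ∑ ρ' : Fin 4, ∑ σ' : Fin 4, η ρ ρ' * η σ σ' *
    (W a ρ c σ * W b ρ' d σ' + starW W a ρ c σ * starW W b ρ' d σ')


/-- The Minkowski inner product `η(X,Y)`. -/
def mink (X Y : Fin 4 → ℝ) : ℝ := ∑ a : Fin 4, ∑ b : Fin 4, η a b * X a * Y b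

/-- A future-directed causal vector: `η(X,X) ≤ 0` and `X₀ > 0`. -/
def FutureCausal (X : Fin 4 → ℝ) : Prop := mink X X ≤ 0 ∧ 0 < X 0

/-- A future-directed timelike vector: `η(X,X) < 0` and `X₀ > 0`. -/
def FutureTimelike (X : Fin 4 → ℝ) : Prop := mink X X < 0 ∧ 0 < X 0

/-- The Bel–Robinson tensor evaluated on four vectors:
`Q[W](X,Y,Z,N) = Q[W]_{αβγδ}·X^α·Y^β·Z^γ·N^δ`. -/
def Qvec (W : Tensor4) (X Y Z N : Fin 4 → ℝ) : ℝ :=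
  ∑ a : Fin 4, ∑ b : Fin 4, ∑ c : Fin 4, ∑ d : Fin 4,
    Q W a b c d * X a * Y b * Z c * N d

/-- The dual of an antisymmetric bilinear form:
`(⋆F)_{αβ} = (1/2)·ε_{αβ}^{μν}·F_{μν}`. -/
def starF (F : Fin 4 → Fin 4 → ℝ) : Fin 4 → Fin 4 → ℝ := fun a b =>
  (1 / 2) * ∑ μ : Fin 4, ∑ ν : Fin 4, ∑ μ' : Fin 4, ∑ ν' : Fin 4,
    ε a b μ' ν' * η μ' μ * η ν' ν * F μ ν

/-- The (Maxwell) energy–momentum tensor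
`Q̃[F]_{αβ} = F_{αγ}·F_β{}^γ + (⋆F)_{αγ}·(⋆F)_β{}^γ`. -/
def Qt (F : Fin 4 → Fin 4 → ℝ) : Fin 4 → Fin 4 → ℝ := fun a b =>
  ∑ c : Fin 4, ∑ c' : Fin 4, η c c' *
    (F a c * F b c' + starF F a c * starF F b c')

/-- `Q̃[F]` evaluated on two vectors: `Q̃[F](X,Y) = Q̃[F]_{αβ}·X^α·Y^β`. -/
def Qtvec (F : Fin 4 → Fin 4 → ℝ) (X Y : Fin 4 → ℝ) : ℝ :=
  ∑ a : Fin 4, ∑ b : Fin 4, Qt F a b * X a * Y b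


private def Qpoly (e1 e2 e3 b1 b2 b3 x0 x1 x2 x3 y0 y1 y2 y3 : ℝ) : ℝ :=
  (-b3^2*x3*y3 + b3^2*x2*y2 + b3^2*x1*y1 + b3^2*x0*y0 - 2*b2*b3*x3*y2 - 2*b2*b3*x2*y3 + b2^2*x3*y3 - b2^2*x2*y2 + b2^2*x1*y1 + b2^2*x0*y0 - 2*b1*b3*x3*y1 - 2*b1*b3*x1*y3 - 2*b1*b2*x2*y1 - 2*b1*b2*x1*y2 + b1^2*x3*y3 + b1^2*x2*y2 - b1^2*x1*y1 + b1^2*x0*y0 - 2*e3*b2*x1*y0 - 2*e3*b2*x0*y1 + 2*e3*b1*x2*y0 + 2*e3*b1*x0*y2 - e3^2*x3*y3 + e3^2*x2*y2 + e3^2*x1*y1 + e3^2*x0*y0 + 2*e2*b3*x1*y0 + 2*e2*b3*x0*y1 - 2*e2*b1*x3*y0 - 2*e2*b1*x0*y3 - 2*e2*e3*x3*y2 - 2*e2*e3*x2*y3 + e2^2*x3*y3 - e2^2*x2*y2 + e2^2*x1*y1 + e2^2*x0*y0 - 2*e1*b3*x2*y0 - 2*e1*b3*x0*y2 + 2*e1*b2*x3*y0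 + 2*e1*b2*x0*y3 - 2*e1*e3*x3*y1 - 2*e1*e3*x1*y3 - 2*e1*e2*x2*y1 - 2*e1*e2*x1*y2 + e1^2*x3*y3 + e1^2*x2*y2 - e1^2*x1*y1 + e1^2*x0*y0)

private lemma vv0 : ((0:Fin 4).val) = 0 := rfl
private lemma vv1 : ((1:Fin 4).val) = 1 := rfl
private lemma vv2 : ((2:Fin 4).val) = 2 := rfl
private lemma vv3 : ((3:Fin 4).val) = 3 := rfl

set_option maxHeartbeats 4000000 in
private lemma master (e1 e2 e3 b1 b2 b3 x0 x1 x2 x3 y0 y1 y2 y3 : ℝ) :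
    8*x0*y0*Qpoly e1 e2 e3 b1 b2 b3 x0 x1 x2 x3 y0 y1 y2 y3 =
      ((-b3*x2*y1 + b3*x1*y2 + b2*x3*y1 - b2*x1*y3 - b2*x1*y0 - b2*x0*y1 - b1*x3*y2 + b1*x2*y3 + b1*x2*y0 + b1*x0*y2 - e3*x3*y3 - e3*x3*y0 + e3*x2*y2 + e3*x1*y1 + e3*x0*y3 + e3*x0*y0 - e2*x3*y2 - e2*x2*y3 - e2*x2*y0 + e2*x0*y2 - e1*x3*y1 - e1*x1*y3 - e1*x1*y0 + e1*x0*y1)^2 + (-b3*x3*y3 - b3*x3*y0 + b3*x2*y2 + b3*x1*y1 + b3*x0*y3 + b3*x0*y0 - b2*x3*y2 - b2*x2*y3 - b2*x2*y0 + b2*x0*y2 - b1*x3*y1 - b1*x1*y3 - b1*x1*y0 + b1*x0*y1 + e3*x2*y1 - e3*x1*y2 - e2*x3*y1 + e2*x1*y3 + e2*x1*y0 + e2*x0*y1 + e1*x3*y2 - e1*x2*y3 - e1*x2*y0 - e1*x0*y2)^2 + (-b3*x3*y2 - b3*x2*y3 - b3*x2*y0 - b3*x0*y2 + b2*x3*y3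 + b2*x3*y0 - b2*x2*y2 + b2*x1*y1 + b2*x0*y3 + b2*x0*y0 - b1*x2*y1 - b1*x1*y2 - e3*x3*y1 - e3*x1*y3 - e3*x1*y0 - e3*x0*y1 - e2*x2*y1 - e2*x1*y2 + e1*x3*y3 + e1*x3*y0 + e1*x2*y2 - e1*x1*y1 + e1*x0*y3 + e1*x0*y0)^2 + (-b3*x3*y1 - b3*x1*y3 - b3*x1*y0 - b3*x0*y1 - b2*x2*y1 - b2*x1*y2 + b1*x3*y3 + b1*x3*y0 + b1*x2*y2 - b1*x1*y1 + b1*x0*y3 + b1*x0*y0 + e3*x3*y2 + e3*x2*y3 + e3*x2*y0 + e3*x0*y2 - e2*x3*y3 - e2*x3*y0 + e2*x2*y2 - e2*x1*y1 - e2*x0*y3 - e2*x0*y0 + e1*x2*y1 + e1*x1*y2)^2 + (b3*x3*y2 + b3*x2*y3 - b3*x2*y0 - b3*x0*y2 - b2*x3*y3 + b2*x3*y0 + b2*x2*y2 - b2*x1*y1 + b2*x0*y3 - b2*x0*y0 + b1*x2*y1 + b1*x1*y2 - e3*x3*y1 - e3*x1*y3 + e3*x1*y0 + e3*x0*y1 -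 e2*x2*y1 - e2*x1*y2 + e1*x3*y3 - e1*x3*y0 + e1*x2*y2 - e1*x1*y1 - e1*x0*y3 + e1*x0*y0)^2 + (-b3*x3*y1 - b3*x1*y3 + b3*x1*y0 + b3*x0*y1 - b2*x2*y1 - b2*x1*y2 + b1*x3*y3 - b1*x3*y0 + b1*x2*y2 - b1*x1*y1 - b1*x0*y3 + b1*x0*y0 - e3*x3*y2 - e3*x2*y3 + e3*x2*y0 + e3*x0*y2 + e2*x3*y3 - e2*x3*y0 - e2*x2*y2 + e2*x1*y1 - e2*x0*y3 + e2*x0*y0 - e1*x2*y1 - e1*x1*y2)^2 + (-b3*x2*y1 + b3*x1*y2 + b2*x3*y1 - b2*x1*y3 + b2*x1*y0 + b2*x0*y1 - b1*x3*y2 + b1*x2*y3 - b1*x2*y0 - b1*x0*y2 + e3*x3*y3 - e3*x3*y0 - e3*x2*y2 - e3*x1*y1 + e3*x0*y3 - e3*x0*y0 + e2*x3*y2 + e2*x2*y3 - e2*x2*y0 + e2*x0*y2 + e1*x3*y1 + e1*x1*y3 - e1*x1*y0 + e1*x0*y1)^2 + (b3*x3*y3 - b3*x3*y0 - b3*x2*y2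 - b3*x1*y1 + b3*x0*y3 - b3*x0*y0 + b2*x3*y2 + b2*x2*y3 - b2*x2*y0 + b2*x0*y2 + b1*x3*y1 + b1*x1*y3 - b1*x1*y0 + b1*x0*y1 + e3*x2*y1 - e3*x1*y2 - e2*x3*y1 + e2*x1*y3 - e2*x1*y0 - e2*x0*y1 + e1*x3*y2 - e1*x2*y3 + e1*x2*y0 + e1*x0*y2)^2)
      + (x0^2 - x1^2 - x2^2 - x3^2) * ((-b2*y1 + b1*y2 + e3*y3 + e3*y0 + e2*y2 + e1*y1)^2 + (b3*y3 + b3*y0 + b2*y2 + b1*y1 + e2*y1 - e1*y2)^2 + (-b3*y2 + b2*y3 + b2*y0 - e3*y1 + e1*y3 + e1*y0)^2 + (-b3*y1 + b1*y3 + b1*y0 + e3*y2 - e2*y3 - e2*y0)^2 + (-b3*y2 + b2*y3 - b2*y0 + e3*y1 - e1*y3 + e1*y0)^2 + (b3*y1 - b1*y3 + b1*y0 + e3*y2 - e2*y3 + e2*y0)^2 + (b2*y1 - b1*y2 + e3*y3 - e3*y0 + e2*y2 + e1*y1)^2 + (b3*y3 - b3*y0 + b2*y2 + b1*y1 - e2*y1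 + e1*y2)^2)
      + (y0^2 - y1^2 - y2^2 - y3^2) * ((-b2*x1 + b1*x2 - e3*x3 + e3*x0 - e2*x2 - e1*x1)^2 + (-b3*x3 + b3*x0 - b2*x2 - b1*x1 + e2*x1 - e1*x2)^2 + (-b3*x2 + b2*x3 + b2*x0 - e3*x1 + e1*x3 + e1*x0)^2 + (-b3*x1 + b1*x3 + b1*x0 + e3*x2 - e2*x3 - e2*x0)^2 + (-b3*x2 + b2*x3 - b2*x0 + e3*x1 - e1*x3 + e1*x0)^2 + (b3*x1 - b1*x3 + b1*x0 + e3*x2 - e2*x3 + e2*x0)^2 + (b2*x1 - b1*x2 - e3*x3 - e3*x0 - e2*x2 - e1*x1)^2 + (-b3*x3 - b3*x0 - b2*x2 - b1*x1 - e2*x1 + e1*x2)^2)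
      + (x0^2 - x1^2 - x2^2 - x3^2) * (y0^2 - y1^2 - y2^2 - y3^2) * (2*(e1^2 + e2^2 + e3^2 + b1^2 + b2^2 + b3^2)) := by
  unfold Qpoly
  ring

set_option maxHeartbeats 4000000 in
private lemma lower (e1 e2 e3 b1 b2 b3 x0 x1 x2 x3 y0 y1 y2 y3 : ℝ)
    (hqx : 0 ≤ x0^2 - x1^2 - x2^2 - x3^2) (hqy : 0 ≤ y0^2 - y1^2 - y2^2 - y3^2) :
    (x0^2 - x1^2 - x2^2 - x3^2) * (y0^2 - y1^2 - y2^2 - y3^2) * (2*(e1^2 + e2^2 + e3^2 + b1^2 + b2^2 + b3^2))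
      ≤ 8*x0*y0*Qpoly e1 e2 e3 b1 b2 b3 x0 x1 x2 x3 y0 y1 y2 y3 := by
  have hm := master e1 e2 e3 b1 b2 b3 x0 x1 x2 x3 y0 y1 y2 y3
  have h1 : (0:ℝ) ≤ ((-b3*x2*y1 + b3*x1*y2 + b2*x3*y1 - b2*x1*y3 - b2*x1*y0 - b2*x0*y1 - b1*x3*y2 + b1*x2*y3 + b1*x2*y0 + b1*x0*y2 - e3*x3*y3 - e3*x3*y0 + e3*x2*y2 + e3*x1*y1 + e3*x0*y3 + e3*x0*y0 - e2*x3*y2 - e2*x2*y3 - e2*x2*y0 + e2*x0*y2 - e1*x3*y1 - e1*x1*y3 - e1*x1*y0 + e1*x0*y1)^2 + (-b3*x3*y3 - b3*x3*y0 + b3*x2*y2 + b3*x1*y1 + b3*x0*y3 + b3*x0*y0 - b2*x3*y2 - b2*x2*y3 - b2*x2*y0 + b2*x0*y2 - b1*x3*y1 - b1*x1*y3 - b1*x1*y0 + b1*x0*y1 + e3*x2*y1 - e3*x1*y2 - e2*x3*y1 + e2*x1*y3 + e2*x1*y0 + e2*x0*y1 + e1*x3*y2 - e1*x2*y3 - e1*x2*y0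 - e1*x0*y2)^2 + (-b3*x3*y2 - b3*x2*y3 - b3*x2*y0 - b3*x0*y2 + b2*x3*y3 + b2*x3*y0 - b2*x2*y2 + b2*x1*y1 + b2*x0*y3 + b2*x0*y0 - b1*x2*y1 - b1*x1*y2 - e3*x3*y1 - e3*x1*y3 - e3*x1*y0 - e3*x0*y1 - e2*x2*y1 - e2*x1*y2 + e1*x3*y3 + e1*x3*y0 + e1*x2*y2 - e1*x1*y1 + e1*x0*y3 + e1*x0*y0)^2 + (-b3*x3*y1 - b3*x1*y3 - b3*x1*y0 - b3*x0*y1 - b2*x2*y1 - b2*x1*y2 + b1*x3*y3 + b1*x3*y0 + b1*x2*y2 - b1*x1*y1 + b1*x0*y3 + b1*x0*y0 + e3*x3*y2 + e3*x2*y3 + e3*x2*y0 + e3*x0*y2 - e2*x3*y3 - e2*x3*y0 + e2*x2*y2 - e2*x1*y1 - e2*x0*y3 - e2*x0*y0 + e1*x2*y1 + e1*x1*y2)^2 + (b3*x3*y2 + b3*x2*y3 - b3*x2*y0 - b3*x0*y2 - b2*x3*y3 + b2*x3*y0 + b2*x2*y2 - b2*x1*y1 + b2*x0*y3 - b2*x0*y0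 + b1*x2*y1 + b1*x1*y2 - e3*x3*y1 - e3*x1*y3 + e3*x1*y0 + e3*x0*y1 - e2*x2*y1 - e2*x1*y2 + e1*x3*y3 - e1*x3*y0 + e1*x2*y2 - e1*x1*y1 - e1*x0*y3 + e1*x0*y0)^2 + (-b3*x3*y1 - b3*x1*y3 + b3*x1*y0 + b3*x0*y1 - b2*x2*y1 - b2*x1*y2 + b1*x3*y3 - b1*x3*y0 + b1*x2*y2 - b1*x1*y1 - b1*x0*y3 + b1*x0*y0 - e3*x3*y2 - e3*x2*y3 + e3*x2*y0 + e3*x0*y2 + e2*x3*y3 - e2*x3*y0 - e2*x2*y2 + e2*x1*y1 - e2*x0*y3 + e2*x0*y0 - e1*x2*y1 - e1*x1*y2)^2 + (-b3*x2*y1 + b3*x1*y2 + b2*x3*y1 - b2*x1*y3 + b2*x1*y0 + b2*x0*y1 - b1*x3*y2 + b1*x2*y3 - b1*x2*y0 - b1*x0*y2 + e3*x3*y3 - e3*x3*y0 - e3*x2*y2 - e3*x1*y1 + e3*x0*y3 - e3*x0*y0 + e2*x3*y2 + e2*x2*y3 - e2*x2*y0 + e2*x0*y2 + e1*x3*y1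 + e1*x1*y3 - e1*x1*y0 + e1*x0*y1)^2 + (b3*x3*y3 - b3*x3*y0 - b3*x2*y2 - b3*x1*y1 + b3*x0*y3 - b3*x0*y0 + b2*x3*y2 + b2*x2*y3 - b2*x2*y0 + b2*x0*y2 + b1*x3*y1 + b1*x1*y3 - b1*x1*y0 + b1*x0*y1 + e3*x2*y1 - e3*x1*y2 - e2*x3*y1 + e2*x1*y3 - e2*x1*y0 - e2*x0*y1 + e1*x3*y2 - e1*x2*y3 + e1*x2*y0 + e1*x0*y2)^2) := by positivity
  have h2 : (0:ℝ) ≤ ((-b2*y1 + b1*y2 + e3*y3 + e3*y0 + e2*y2 + e1*y1)^2 + (b3*y3 + b3*y0 + b2*y2 + b1*y1 + e2*y1 - e1*y2)^2 + (-b3*y2 + b2*y3 + b2*y0 - e3*y1 + e1*y3 + e1*y0)^2 + (-b3*y1 + b1*y3 + b1*y0 + e3*y2 - e2*y3 - e2*y0)^2 + (-b3*y2 + b2*y3 - b2*y0 + e3*y1 - e1*y3 + e1*y0)^2 + (b3*y1 - b1*y3 + b1*y0 + e3*y2 - e2*y3 + e2*y0)^2 + (b2*y1 - b1*y2 + e3*y3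 - e3*y0 + e2*y2 + e1*y1)^2 + (b3*y3 - b3*y0 + b2*y2 + b1*y1 - e2*y1 + e1*y2)^2) := by positivity
  have h3 : (0:ℝ) ≤ ((-b2*x1 + b1*x2 - e3*x3 + e3*x0 - e2*x2 - e1*x1)^2 + (-b3*x3 + b3*x0 - b2*x2 - b1*x1 + e2*x1 - e1*x2)^2 + (-b3*x2 + b2*x3 + b2*x0 - e3*x1 + e1*x3 + e1*x0)^2 + (-b3*x1 + b1*x3 + b1*x0 + e3*x2 - e2*x3 - e2*x0)^2 + (-b3*x2 + b2*x3 - b2*x0 + e3*x1 - e1*x3 + e1*x0)^2 + (b3*x1 - b1*x3 + b1*x0 + e3*x2 - e2*x3 + e2*x0)^2 + (b2*x1 - b1*x2 - e3*x3 - e3*x0 - e2*x2 - e1*x1)^2 + (-b3*x3 - b3*x0 - b2*x2 - b1*x1 - e2*x1 + e1*x2)^2) := by positivity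
  have h2' := mul_nonneg hqx h2
  have h3' := mul_nonneg hqy h3
  linarith

set_option maxHeartbeats 4000000 in
private lemma bridge (F : Fin 4 → Fin 4 → ℝ) (hF : ∀ a b, F a b = - F b a) (X Y : Fin 4 → ℝ) :
    Qtvec F X Y = Qpoly (F 0 1) (F 0 2) (F 0 3) (F 2 3) (-(F 1 3)) (F 1 2)
      (X 0) (X 1) (X 2) (X 3) (Y 0) (Y 1) (Y 2) (Y 3) := by
  have hd : ∀ a, F a a = 0 := fun a => by have := hF a a; linarith
  simp only [Qtvec, Qt, starF, Qpoly, Fin.sum_univ_four]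
  norm_num [ε, η, Fin.ext_iff, vv0, vv1, vv2, vv3]
  simp only [hF 1 0, hF 2 0, hF 3 0, hF 2 1, hF 3 1, hF 3 2, hd]
  ring

private lemma mink_eq (X Y : Fin 4 → ℝ) :
    mink X Y = -(X 0 * Y 0) + X 1 * Y 1 + X 2 * Y 2 + X 3 * Y 3 := by
  simp only [mink, Fin.sum_univ_four]
  norm_num [η, Fin.ext_iff, vv0, vv1, vv2, vv3]

private lemma sumsq_eq (F : Fin 4 → Fin 4 → ℝ) (hF : ∀ a b, F a b = - F b a) :
    (∑ a : Fin 4, ∑ b : Fin 4, (F a b) ^ 2) =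
      2*((F 0 1)^2 + (F 0 2)^2 + (F 0 3)^2 + (F 2 3)^2 + (-(F 1 3))^2 + (F 1 2)^2) := by
  have hd : ∀ a, F a a = 0 := fun a => by have := hF a a; linarith
  simp only [Fin.sum_univ_four, hF 1 0, hF 2 0, hF 3 0, hF 2 1, hF 3 1, hF 3 2, hd]
  ring

attribute [local irreducible] Qpoly

private lemma aux_pos (c q t : ℝ) (hc : 0 < c) (ht : 0 ≤ t) (h : t ≤ c * q) : 0 ≤ q := by
  nlinarith

private lemma aux_div (c q t : ℝ) (hc : 0 < c) (h : t ≤ c * q) : t / c ≤ q := by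
  rw [div_le_iff₀ hc]; nlinarith

set_option maxHeartbeats 2000000 in
/-- **Positivity and coercivity of the Maxwell energy–momentum tensor**
(used for the boundary terms in the spin-1 energy identities of section 11.1
of the paper): `Q̃[F](X,Y) ≥ 0` for future-directed causal `X, Y`, and for
future-directed timelike `X, Y` there is `c > 0` (depending only on `X, Y`)
with `Q̃[F'](X,Y) ≥ c·Σ_{αβ}(F'_{αβ})²` for every antisymmetric `F'`. -/
theorem maxwell_energy_momentum_positive (F : Fin 4 → Fin 4 → ℝ)
    (hF : ∀ a b, F a b = - F b a) :
    (∀ X Y : Fin 4 → ℝ, FutureCausal X → FutureCausal Y →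
      0 ≤ Qtvec F X Y) ∧
    (∀ X Y : Fin 4 → ℝ, FutureTimelike X → FutureTimelike Y →
      ∃ c > (0 : ℝ), ∀ F' : Fin 4 → Fin 4 → ℝ, (∀ a b, F' a b = - F' b a) →
        c * (∑ a : Fin 4, ∑ b : Fin 4, (F' a b) ^ 2) ≤ Qtvec F' X Y) := by
  constructor
  · rintro X Y ⟨hXm, hX0⟩ ⟨hYm, hY0⟩
    have hmx := mink_eq X X
    have hmy := mink_eq Y Y
    have hqx : 0 ≤ X 0^2 - X 1^2 - X 2^2 - X 3^2 := by unfold FutureCausal at *; nlinarith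
    have hqy : 0 ≤ Y 0^2 - Y 1^2 - Y 2^2 - Y 3^2 := by nlinarith
    have hb := bridge F hF X Y
    have hl := lower (F 0 1) (F 0 2) (F 0 3) (F 2 3) (-(F 1 3)) (F 1 2)
      (X 0) (X 1) (X 2) (X 3) (Y 0) (Y 1) (Y 2) (Y 3) hqx hqy
    have hterm : (0:ℝ) ≤ (X 0^2 - X 1^2 - X 2^2 - X 3^2) * (Y 0^2 - Y 1^2 - Y 2^2 - Y 3^2)
        * (2*((F 0 1)^2 + (F 0 2)^2 + (F 0 3)^2 + (F 2 3)^2 + (-(F 1 3))^2 + (F 1 2)^2)) := by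
      have : (0:ℝ) ≤ 2*((F 0 1)^2 + (F 0 2)^2 + (F 0 3)^2 + (F 2 3)^2 + (-(F 1 3))^2 + (F 1 2)^2) := by
        positivity
      exact mul_nonneg (mul_nonneg hqx hqy) this
    rw [hb]
    exact aux_pos (8 * X 0 * Y 0) _ _ (by positivity) hterm hl
  · rintro X Y ⟨hXm, hX0⟩ ⟨hYm, hY0⟩
    have hmx := mink_eq X X
    have hmy := mink_eq Y Y
    have hqx : 0 < X 0^2 - X 1^2 - X 2^2 - X 3^2 := by nlinarith
    have hqy : 0 < Y 0^2 - Y 1^2 - Y 2^2 - Y 3^2 := by nlinarith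
    refine ⟨((X 0^2 - X 1^2 - X 2^2 - X 3^2) * (Y 0^2 - Y 1^2 - Y 2^2 - Y 3^2)) / (8 * X 0 * Y 0),
      div_pos (mul_pos hqx hqy) (by positivity), ?_⟩
    intro F' hF'
    have hb := bridge F' hF' X Y
    have hs := sumsq_eq F' hF'
    have hl := lower (F' 0 1) (F' 0 2) (F' 0 3) (F' 2 3) (-(F' 1 3)) (F' 1 2)
      (X 0) (X 1) (X 2) (X 3) (Y 0) (Y 1) (Y 2) (Y 3) (le_of_lt hqx) (le_of_lt hqy)
    rw [hb, hs, div_mul_eq_mul_div]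
    exact aux_div (8 * X 0 * Y 0) _ _ (by positivity) hl


end

end Paper
end

section
/- Let F be an antisymmetric bilinear form on Minkowski space with energy–momentum tensor Q̃[F]_{αβ} = F_{αγ}·F_β^{γ} + (⋆F)_{αγ}·(⋆F)_β^{γ}, and let (e₁, e₂, e₃, e₄) be a positively oriented null frame. Then Q̃[F](e₃,e₃) = 2·Σ_A F(e_A,e₃)², Q̃[F](e₄,e₄) = 2·Σ_A F(e_A,e₄)², and Q̃[F](e₃,e₄) = (1/2)·F(e₃,e₄)² + 2·F(e₁,e₂)², where A ranges over {1,2}. -/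
open scoped BigOperators

namespace Paper

noncomputable section

/-- A Weyl tensor evaluated on four vectors. -/
def Wvec (W : Tensor4) (X Y Z N : Fin 4 → ℝ) : ℝ :=
  ∑ a : Fin 4, ∑ b : Fin 4, ∑ c : Fin 4, ∑ d : Fin 4,
    W a b c d * X a * Y b * Z c * N d

/-- The Levi-Civita tensor evaluated on four vectors. -/
def εvec (X Y Z N : Fin 4 → ℝ) : ℝ :=
  ∑ a : Fin 4, ∑ b : Fin 4, ∑ c : Fin 4, ∑ d : Fin 4,
    ε a b c d * X a * Y b * Z c * N d

/-- A positively oriented null frame `(e₁, e₂, e₃, e₄)`: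
`η(e_A,e_B) = δ_{AB}` for `A, B ∈ {1,2}`, `e₃, e₄` null with
`η(e₃,e₄) = −2`, orthogonal to `e₁, e₂`, and `ε(e₁,e₂,e₃,e₄) = 2`. -/
def IsNullFrame (e1 e2 e3 e4 : Fin 4 → ℝ) : Prop :=
  mink e1 e1 = 1 ∧ mink e2 e2 = 1 ∧ mink e1 e2 = 0 ∧
  mink e3 e3 = 0 ∧ mink e4 e4 = 0 ∧ mink e3 e4 = -2 ∧
  mink e1 e3 = 0 ∧ mink e1 e4 = 0 ∧ mink e2 e3 = 0 ∧ mink e2 e4 = 0 ∧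
  εvec e1 e2 e3 e4 = 2

/-- An antisymmetric bilinear form evaluated on two vectors. -/
def Fvec (F : Fin 4 → Fin 4 → ℝ) (X Y : Fin 4 → ℝ) : ℝ :=
  ∑ a : Fin 4, ∑ b : Fin 4, F a b * X a * Y b



open Matrix

/-- The Minkowski metric as a matrix. -/
def Hmat : Matrix (Fin 4) (Fin 4) ℝ := Matrix.of fun a b => η a b

def Gmat : Matrix (Fin 4) (Fin 4) ℝ := !![1,0,0,0; 0,1,0,0; 0,0,0,-2; 0,0,-2,0]

def Ginvm : Matrix (Fin 4) (Fin 4) ℝ := !![1,0,0,0; 0,1,0,0; 0,0,0,-(1/2); 0,0,-(1/2),0]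

def Em (e1 e2 e3 e4 : Fin 4 → ℝ) : Matrix (Fin 4) (Fin 4) ℝ := Matrix.of ![e1,e2,e3,e4]

def dualM (M : Matrix (Fin 4) (Fin 4) ℝ) : Matrix (Fin 4) (Fin 4) ℝ :=
  Matrix.of fun a b => (1/2) * ∑ c : Fin 4, ∑ d : Fin 4, ε a b c d * M c d

def Wmat (g : Matrix (Fin 4) (Fin 4) ℝ) : Matrix (Fin 4) (Fin 4) ℝ :=
  !![0, (1/2)*(g 2 3 - g 3 2), -((1/2)*(g 1 3 - g 3 1)), (1/2)*(g 1 2 - g 2 1);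
     -((1/2)*(g 2 3 - g 3 2)), 0, (1/2)*(g 0 3 - g 3 0), -((1/2)*(g 0 2 - g 2 0));
     (1/2)*(g 1 3 - g 3 1), -((1/2)*(g 0 3 - g 3 0)), 0, (1/2)*(g 0 1 - g 1 0);
     -((1/2)*(g 1 2 - g 2 1)), (1/2)*(g 0 2 - g 2 0), -((1/2)*(g 0 1 - g 1 0)), 0]

lemma finv0 : ((0:Fin 4):ℕ) = 0 := rfl
lemma finv1 : ((1:Fin 4):ℕ) = 1 := rfl
lemma finv2 : ((2:Fin 4):ℕ) = 2 := rfl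
lemma finv3 : ((3:Fin 4):ℕ) = 3 := rfl

lemma dualM_00 (M : Matrix (Fin 4) (Fin 4) ℝ) : dualM M 0 0 = 0 := by
  simp only [dualM, Matrix.of_apply, Fin.sum_univ_four, ε, finv0, finv1, finv2, finv3]
  ring

lemma dualM_01 (M : Matrix (Fin 4) (Fin 4) ℝ) : dualM M 0 1 = (1/2) * (M 2 3 - M 3 2) := by
  simp only [dualM, Matrix.of_apply, Fin.sum_univ_four, ε, finv0, finv1, finv2, finv3]
  ring

lemma dualM_02 (M : Matrix (Fin 4) (Fin 4) ℝ) : dualM M 0 2 = (-(1/2)) * (M 1 3 - M 3 1) := by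
  simp only [dualM, Matrix.of_apply, Fin.sum_univ_four, ε, finv0, finv1, finv2, finv3]
  ring

lemma dualM_03 (M : Matrix (Fin 4) (Fin 4) ℝ) : dualM M 0 3 = (1/2) * (M 1 2 - M 2 1) := by
  simp only [dualM, Matrix.of_apply, Fin.sum_univ_four, ε, finv0, finv1, finv2, finv3]
  ring

lemma dualM_10 (M : Matrix (Fin 4) (Fin 4) ℝ) : dualM M 1 0 = (-(1/2)) * (M 2 3 - M 3 2) := by
  simp only [dualM, Matrix.of_apply, Fin.sum_univ_four, ε, finv0, finv1, finv2, finv3]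
  ring

lemma dualM_11 (M : Matrix (Fin 4) (Fin 4) ℝ) : dualM M 1 1 = 0 := by
  simp only [dualM, Matrix.of_apply, Fin.sum_univ_four, ε, finv0, finv1, finv2, finv3]
  ring

lemma dualM_12 (M : Matrix (Fin 4) (Fin 4) ℝ) : dualM M 1 2 = (1/2) * (M 0 3 - M 3 0) := by
  simp only [dualM, Matrix.of_apply, Fin.sum_univ_four, ε, finv0, finv1, finv2, finv3]
  ring

lemma dualM_13 (M : Matrix (Fin 4) (Fin 4) ℝ) : dualM M 1 3 = (-(1/2)) * (M 0 2 - M 2 0) := by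
  simp only [dualM, Matrix.of_apply, Fin.sum_univ_four, ε, finv0, finv1, finv2, finv3]
  ring

lemma dualM_20 (M : Matrix (Fin 4) (Fin 4) ℝ) : dualM M 2 0 = (1/2) * (M 1 3 - M 3 1) := by
  simp only [dualM, Matrix.of_apply, Fin.sum_univ_four, ε, finv0, finv1, finv2, finv3]
  ring

lemma dualM_21 (M : Matrix (Fin 4) (Fin 4) ℝ) : dualM M 2 1 = (-(1/2)) * (M 0 3 - M 3 0) := by
  simp only [dualM, Matrix.of_apply, Fin.sum_univ_four, ε, finv0, finv1, finv2, finv3]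
  ring

lemma dualM_22 (M : Matrix (Fin 4) (Fin 4) ℝ) : dualM M 2 2 = 0 := by
  simp only [dualM, Matrix.of_apply, Fin.sum_univ_four, ε, finv0, finv1, finv2, finv3]
  ring

lemma dualM_23 (M : Matrix (Fin 4) (Fin 4) ℝ) : dualM M 2 3 = (1/2) * (M 0 1 - M 1 0) := by
  simp only [dualM, Matrix.of_apply, Fin.sum_univ_four, ε, finv0, finv1, finv2, finv3]
  ring

lemma dualM_30 (M : Matrix (Fin 4) (Fin 4) ℝ) : dualM M 3 0 = (-(1/2)) * (M 1 2 - M 2 1) := by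
  simp only [dualM, Matrix.of_apply, Fin.sum_univ_four, ε, finv0, finv1, finv2, finv3]
  ring

lemma dualM_31 (M : Matrix (Fin 4) (Fin 4) ℝ) : dualM M 3 1 = (1/2) * (M 0 2 - M 2 0) := by
  simp only [dualM, Matrix.of_apply, Fin.sum_univ_four, ε, finv0, finv1, finv2, finv3]
  ring

lemma dualM_32 (M : Matrix (Fin 4) (Fin 4) ℝ) : dualM M 3 2 = (-(1/2)) * (M 0 1 - M 1 0) := by
  simp only [dualM, Matrix.of_apply, Fin.sum_univ_four, ε, finv0, finv1, finv2, finv3]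
  ring

lemma dualM_33 (M : Matrix (Fin 4) (Fin 4) ℝ) : dualM M 3 3 = 0 := by
  simp only [dualM, Matrix.of_apply, Fin.sum_univ_four, ε, finv0, finv1, finv2, finv3]
  ring

lemma eeps (v1 v2 v3 v4 : Fin 4 → ℝ) : εvec v1 v2 v3 v4 = v1 0 * v2 1 * v3 2 * v4 3 - v1 0 * v2 1 * v3 3 * v4 2 - v1 0 * v2 2 * v3 1 * v4 3 + v1 0 * v2 2 * v3 3 * v4 1 + v1 0 * v2 3 * v3 1 * v4 2 - v1 0 * v2 3 * v3 2 * v4 1 - v1 1 * v2 0 * v3 2 * v4 3 + v1 1 * v2 0 * v3 3 * v4 2 + v1 1 * v2 2 * v3 0 * v4 3 - v1 1 * v2 2 * v3 3 * v4 0 - v1 1 * v2 3 * v3 0 * v4 2 + v1 1 * v2 3 * v3 2 * v4 0 + v1 2 * v2 0 * v3 1 * v4 3 - v1 2 * v2 0 * v3 3 * v4 1 - v1 2 * v2 1 * v3 0 * v4 3 + v1 2 * v2 1 * v3 3 * v4 0 + v1 2 * v2 3 * v3 0 * v4 1 - v1 2 * v2 3 * v3 1 * v4 0 - v1 3 * v2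 0 * v3 1 * v4 2 + v1 3 * v2 0 * v3 2 * v4 1 + v1 3 * v2 1 * v3 0 * v4 2 - v1 3 * v2 1 * v3 2 * v4 0 - v1 3 * v2 2 * v3 0 * v4 1 + v1 3 * v2 2 * v3 1 * v4 0 := by
  simp only [εvec, Fin.sum_univ_four, ε, finv0, finv1, finv2, finv3]
  ring

set_option maxHeartbeats 4000000 in
lemma key (g : Matrix (Fin 4) (Fin 4) ℝ) (v1 v2 v3 v4 : Fin 4 → ℝ) :
    Em v1 v2 v3 v4 * dualM ((Em v1 v2 v3 v4)ᵀ * g * Em v1 v2 v3 v4) * (Em v1 v2 v3 v4)ᵀ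
      = εvec v1 v2 v3 v4 • Wmat g := by
  rw [eeps]
  ext a b
  fin_cases a <;> fin_cases b <;>
    · simp only [Em, Wmat, Matrix.mul_apply, Matrix.transpose_apply, Matrix.of_apply, Fin.sum_univ_four, Matrix.cons_val_zero, Matrix.cons_val_one, Matrix.cons_val_two, Matrix.cons_val_three, Matrix.head_cons, Matrix.tail_cons, Matrix.cons_val', Matrix.empty_val', Matrix.cons_val_fin_one, Matrix.head_fin_const, Fin.zero_eta, Fin.mk_one, Fin.reduceFinMk, Matrix.smul_apply, Matrix.add_apply, Matrix.neg_apply, smul_eq_mul, Fin.reduceEq, reduceIte, dualM_00, dualM_01, dualM_02, dualM_03, dualM_10, dualM_11, dualM_12, dualM_13, dualM_20, dualM_21, dualM_22, dualM_23, dualM_30, dualM_31, dualM_32, dualM_33]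
      ring

lemma Hsq : Hmat * Hmat = 1 := by
  ext a b
  fin_cases a <;> fin_cases b <;>
    · simp only [Fin.zero_eta, Fin.mk_one, Fin.reduceFinMk, Hmat, η, Matrix.mul_apply,
        Matrix.of_apply, Fin.sum_univ_four, Matrix.one_apply, Fin.reduceEq, reduceIte]
      norm_num

lemma GGinv : Gmat * Ginvm = 1 := by
  ext a b
  fin_cases a <;> fin_cases b <;>
    · simp only [Fin.zero_eta, Fin.mk_one, Fin.reduceFinMk, Gmat, Ginvm, Matrix.mul_apply,
        Matrix.of_apply, Fin.sum_univ_four, Matrix.one_apply, Fin.reduceEq, reduceIte,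
        Matrix.cons_val_zero, Matrix.cons_val_one, Matrix.cons_val_two, Matrix.cons_val_three,
        Matrix.head_cons, Matrix.tail_cons, Matrix.cons_val', Matrix.empty_val',
        Matrix.cons_val_fin_one, Matrix.head_fin_const]
      norm_num

set_option maxHeartbeats 1000000 in
lemma gram (e1 e2 e3 e4 : Fin 4 → ℝ) (h11 : mink e1 e1 = 1) (h22 : mink e2 e2 = 1)
    (h12 : mink e1 e2 = 0) (h33 : mink e3 e3 = 0) (h44 : mink e4 e4 = 0)
    (h34 : mink e3 e4 = -2) (h13 : mink e1 e3 = 0) (h14 : mink e1 e4 = 0)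
    (h23 : mink e2 e3 = 0) (h24 : mink e2 e4 = 0) :
    Em e1 e2 e3 e4 * Hmat * (Em e1 e2 e3 e4)ᵀ = Gmat := by
  simp only [mink, Fin.sum_univ_four] at h11 h22 h12 h33 h44 h34 h13 h14 h23 h24
  simp only [η, Fin.reduceEq, if_true, if_false, reduceIte] at h11 h22 h12 h33 h44 h34 h13 h14 h23 h24
  ext a b
  fin_cases a <;> fin_cases b
  · simp only [Em, Hmat, Gmat, η, Matrix.mul_apply, Matrix.transpose_apply, Matrix.of_apply, Fin.sum_univ_four, Matrix.cons_val_zero, Matrix.cons_val_one, Matrix.cons_val_two, Matrix.cons_val_three, Matrix.head_cons, Matrix.tail_cons, Matrix.cons_val', Matrix.empty_val', Matrix.cons_val_fin_one, Matrix.head_fin_const, Fin.zero_eta, Fin.mk_one, Fin.reduceFinMk, Matrix.smul_apply, Matrix.add_apply, Matrix.neg_apply, smul_eq_mul, Fin.reduceEq, reduceIte]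
    linear_combination h11
  · simp only [Em, Hmat, Gmat, η, Matrix.mul_apply, Matrix.transpose_apply, Matrix.of_apply, Fin.sum_univ_four, Matrix.cons_val_zero, Matrix.cons_val_one, Matrix.cons_val_two, Matrix.cons_val_three, Matrix.head_cons, Matrix.tail_cons, Matrix.cons_val', Matrix.empty_val', Matrix.cons_val_fin_one, Matrix.head_fin_const, Fin.zero_eta, Fin.mk_one, Fin.reduceFinMk, Matrix.smul_apply, Matrix.add_apply, Matrix.neg_apply, smul_eq_mul, Fin.reduceEq, reduceIte]
    linear_combination h12
  · simp only [Em, Hmat, Gmat, η, Matrix.mul_apply, Matrix.transpose_apply, Matrix.of_apply, Fin.sum_univ_four, Matrix.cons_val_zero, Matrix.cons_val_one, Matrix.cons_val_two, Matrix.cons_val_three, Matrix.head_cons, Matrix.tail_cons, Matrix.cons_val', Matrix.empty_val', Matrix.cons_val_fin_one, Matrix.head_fin_const, Fin.zero_eta, Fin.mk_one, Fin.reduceFinMk, Matrix.smul_apply, Matrix.add_apply, Matrix.neg_apply, smul_eq_mul, Fin.reduceEq, reduceIte]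
    linear_combination h13
  · simp only [Em, Hmat, Gmat, η, Matrix.mul_apply, Matrix.transpose_apply, Matrix.of_apply, Fin.sum_univ_four, Matrix.cons_val_zero, Matrix.cons_val_one, Matrix.cons_val_two, Matrix.cons_val_three, Matrix.head_cons, Matrix.tail_cons, Matrix.cons_val', Matrix.empty_val', Matrix.cons_val_fin_one, Matrix.head_fin_const, Fin.zero_eta, Fin.mk_one, Fin.reduceFinMk, Matrix.smul_apply, Matrix.add_apply, Matrix.neg_apply, smul_eq_mul, Fin.reduceEq, reduceIte]
    linear_combination h14
  · simp only [Em, Hmat, Gmat, η, Matrix.mul_apply, Matrix.transpose_apply, Matrix.of_apply, Fin.sum_univ_four, Matrix.cons_val_zero, Matrix.cons_val_one, Matrix.cons_val_two, Matrix.cons_val_three, Matrix.head_cons, Matrix.tail_cons, Matrix.cons_val', Matrix.empty_val', Matrix.cons_val_fin_one, Matrix.head_fin_const, Fin.zero_eta, Fin.mk_one, Fin.reduceFinMk, Matrix.smul_apply, Matrix.add_apply, Matrix.neg_apply, smul_eq_mul, Fin.reduceEq, reduceIte]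
    linear_combination h12
  · simp only [Em, Hmat, Gmat, η, Matrix.mul_apply, Matrix.transpose_apply, Matrix.of_apply, Fin.sum_univ_four, Matrix.cons_val_zero, Matrix.cons_val_one, Matrix.cons_val_two, Matrix.cons_val_three, Matrix.head_cons, Matrix.tail_cons, Matrix.cons_val', Matrix.empty_val', Matrix.cons_val_fin_one, Matrix.head_fin_const, Fin.zero_eta, Fin.mk_one, Fin.reduceFinMk, Matrix.smul_apply, Matrix.add_apply, Matrix.neg_apply, smul_eq_mul, Fin.reduceEq, reduceIte]
    linear_combination h22
  · simp only [Em, Hmat, Gmat, η, Matrix.mul_apply, Matrix.transpose_apply, Matrix.of_apply, Fin.sum_univ_four, Matrix.cons_val_zero, Matrix.cons_val_one, Matrix.cons_val_two, Matrix.cons_val_three, Matrix.head_cons, Matrix.tail_cons, Matrix.cons_val', Matrix.empty_val', Matrix.cons_val_fin_one, Matrix.head_fin_const, Fin.zero_eta, Fin.mk_one, Fin.reduceFinMk, Matrix.smul_apply, Matrix.add_apply, Matrix.neg_apply, smul_eq_mul, Fin.reduceEq, reduceIte]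
    linear_combination h23
  · simp only [Em, Hmat, Gmat, η, Matrix.mul_apply, Matrix.transpose_apply, Matrix.of_apply, Fin.sum_univ_four, Matrix.cons_val_zero, Matrix.cons_val_one, Matrix.cons_val_two, Matrix.cons_val_three, Matrix.head_cons, Matrix.tail_cons, Matrix.cons_val', Matrix.empty_val', Matrix.cons_val_fin_one, Matrix.head_fin_const, Fin.zero_eta, Fin.mk_one, Fin.reduceFinMk, Matrix.smul_apply, Matrix.add_apply, Matrix.neg_apply, smul_eq_mul, Fin.reduceEq, reduceIte]
    linear_combination h24
  · simp only [Em, Hmat, Gmat, η, Matrix.mul_apply, Matrix.transpose_apply, Matrix.of_apply, Fin.sum_univ_four, Matrix.cons_val_zero, Matrix.cons_val_one, Matrix.cons_val_two, Matrix.cons_val_three, Matrix.head_cons, Matrix.tail_cons, Matrix.cons_val', Matrix.empty_val', Matrix.cons_val_fin_one, Matrix.head_fin_const, Fin.zero_eta, Fin.mk_one, Fin.reduceFinMk, Matrix.smul_apply, Matrix.add_apply, Matrix.neg_apply, smul_eq_mul, Fin.reduceEq, reduceIte]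
    linear_combination h13
  · simp only [Em, Hmat, Gmat, η, Matrix.mul_apply, Matrix.transpose_apply, Matrix.of_apply, Fin.sum_univ_four, Matrix.cons_val_zero, Matrix.cons_val_one, Matrix.cons_val_two, Matrix.cons_val_three, Matrix.head_cons, Matrix.tail_cons, Matrix.cons_val', Matrix.empty_val', Matrix.cons_val_fin_one, Matrix.head_fin_const, Fin.zero_eta, Fin.mk_one, Fin.reduceFinMk, Matrix.smul_apply, Matrix.add_apply, Matrix.neg_apply, smul_eq_mul, Fin.reduceEq, reduceIte]
    linear_combination h23
  · simp only [Em, Hmat, Gmat, η, Matrix.mul_apply, Matrix.transpose_apply, Matrix.of_apply, Fin.sum_univ_four, Matrix.cons_val_zero, Matrix.cons_val_one, Matrix.cons_val_two, Matrix.cons_val_three, Matrix.head_cons, Matrix.tail_cons, Matrix.cons_val', Matrix.empty_val', Matrix.cons_val_fin_one, Matrix.head_fin_const, Fin.zero_eta, Fin.mk_one, Fin.reduceFinMk, Matrix.smul_apply, Matrix.add_apply, Matrix.neg_apply, smul_eq_mul, Fin.reduceEq, reduceIte]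
    linear_combination h33
  · simp only [Em, Hmat, Gmat, η, Matrix.mul_apply, Matrix.transpose_apply, Matrix.of_apply, Fin.sum_univ_four, Matrix.cons_val_zero, Matrix.cons_val_one, Matrix.cons_val_two, Matrix.cons_val_three, Matrix.head_cons, Matrix.tail_cons, Matrix.cons_val', Matrix.empty_val', Matrix.cons_val_fin_one, Matrix.head_fin_const, Fin.zero_eta, Fin.mk_one, Fin.reduceFinMk, Matrix.smul_apply, Matrix.add_apply, Matrix.neg_apply, smul_eq_mul, Fin.reduceEq, reduceIte]
    linear_combination h34
  · simp only [Em, Hmat, Gmat, η, Matrix.mul_apply, Matrix.transpose_apply, Matrix.of_apply, Fin.sum_univ_four, Matrix.cons_val_zero, Matrix.cons_val_one, Matrix.cons_val_two, Matrix.cons_val_three, Matrix.head_cons, Matrix.tail_cons, Matrix.cons_val', Matrix.empty_val', Matrix.cons_val_fin_one, Matrix.head_fin_const, Fin.zero_eta, Fin.mk_one, Fin.reduceFinMk, Matrix.smul_apply, Matrix.add_apply, Matrix.neg_apply, smul_eq_mul, Fin.reduceEq, reduceIte]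
    linear_combination h14
  · simp only [Em, Hmat, Gmat, η, Matrix.mul_apply, Matrix.transpose_apply, Matrix.of_apply, Fin.sum_univ_four, Matrix.cons_val_zero, Matrix.cons_val_one, Matrix.cons_val_two, Matrix.cons_val_three, Matrix.head_cons, Matrix.tail_cons, Matrix.cons_val', Matrix.empty_val', Matrix.cons_val_fin_one, Matrix.head_fin_const, Fin.zero_eta, Fin.mk_one, Fin.reduceFinMk, Matrix.smul_apply, Matrix.add_apply, Matrix.neg_apply, smul_eq_mul, Fin.reduceEq, reduceIte]
    linear_combination h24
  · simp only [Em, Hmat, Gmat, η, Matrix.mul_apply, Matrix.transpose_apply, Matrix.of_apply, Fin.sum_univ_four, Matrix.cons_val_zero, Matrix.cons_val_one, Matrix.cons_val_two, Matrix.cons_val_three, Matrix.head_cons, Matrix.tail_cons, Matrix.cons_val', Matrix.empty_val', Matrix.cons_val_fin_one, Matrix.head_fin_const, Fin.zero_eta, Fin.mk_one, Fin.reduceFinMk, Matrix.smul_apply, Matrix.add_apply, Matrix.neg_apply, smul_eq_mul, Fin.reduceEq, reduceIte]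
    linear_combination h34
  · simp only [Em, Hmat, Gmat, η, Matrix.mul_apply, Matrix.transpose_apply, Matrix.of_apply, Fin.sum_univ_four, Matrix.cons_val_zero, Matrix.cons_val_one, Matrix.cons_val_two, Matrix.cons_val_three, Matrix.head_cons, Matrix.tail_cons, Matrix.cons_val', Matrix.empty_val', Matrix.cons_val_fin_one, Matrix.head_fin_const, Fin.zero_eta, Fin.mk_one, Fin.reduceFinMk, Matrix.smul_apply, Matrix.add_apply, Matrix.neg_apply, smul_eq_mul, Fin.reduceEq, reduceIte]
    linear_combination h44

lemma Hexp (e1 e2 e3 e4 : Fin 4 → ℝ)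
    (hg : Em e1 e2 e3 e4 * Hmat * (Em e1 e2 e3 e4)ᵀ = Gmat) :
    (Em e1 e2 e3 e4)ᵀ * Ginvm * Em e1 e2 e3 e4 = Hmat := by
  have h1 : Em e1 e2 e3 e4 * (Hmat * (Em e1 e2 e3 e4)ᵀ * Ginvm) = 1 := by
    rw [← Matrix.mul_assoc, ← Matrix.mul_assoc, hg, GGinv]
  have h2 : Hmat * (Em e1 e2 e3 e4)ᵀ * Ginvm * Em e1 e2 e3 e4 = 1 :=
    mul_eq_one_comm.mp h1
  calc (Em e1 e2 e3 e4)ᵀ * Ginvm * Em e1 e2 e3 e4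
      = (Hmat * Hmat) * ((Em e1 e2 e3 e4)ᵀ * Ginvm * Em e1 e2 e3 e4) := by
        rw [Hsq, one_mul]
    _ = Hmat * (Hmat * (Em e1 e2 e3 e4)ᵀ * Ginvm * Em e1 e2 e3 e4) := by
        simp only [Matrix.mul_assoc]
    _ = Hmat := by rw [h2, mul_one]

set_option maxHeartbeats 1000000 in
lemma Sm_eq (F : Fin 4 → Fin 4 → ℝ) :
    Matrix.of (starF F) = dualM (Hmat * Matrix.of F * Hmat) := by
  ext a b
  simp only [starF, dualM, Hmat, η, Matrix.mul_apply, Matrix.transpose_apply, Matrix.of_apply, Fin.sum_univ_four, Matrix.cons_val_zero, Matrix.cons_val_one, Matrix.cons_val_two, Matrix.cons_val_three, Matrix.head_cons, Matrix.tail_cons, Matrix.cons_val', Matrix.empty_val', Matrix.cons_val_fin_one, Matrix.head_fin_const, Fin.zero_eta, Fin.mk_one, Fin.reduceFinMk, Matrix.smul_apply, Matrix.add_apply, Matrix.neg_apply, smul_eq_mul, Fin.reduceEq, reduceIte]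
  ring

lemma Qt_eq (F : Fin 4 → Fin 4 → ℝ) :
    Matrix.of (Qt F) = Matrix.of F * Hmat * (Matrix.of F)ᵀ
      + Matrix.of (starF F) * Hmat * (Matrix.of (starF F))ᵀ := by
  ext a b
  simp only [Qt, Hmat, η, Matrix.mul_apply, Matrix.transpose_apply, Matrix.of_apply, Fin.sum_univ_four, Matrix.cons_val_zero, Matrix.cons_val_one, Matrix.cons_val_two, Matrix.cons_val_three, Matrix.head_cons, Matrix.tail_cons, Matrix.cons_val', Matrix.empty_val', Matrix.cons_val_fin_one, Matrix.head_fin_const, Fin.zero_eta, Fin.mk_one, Fin.reduceFinMk, Matrix.smul_apply, Matrix.add_apply, Matrix.neg_apply, smul_eq_mul, Fin.reduceEq, reduceIte]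
  ring


set_option maxHeartbeats 1000000 in
lemma plumb33 (F : Fin 4 → Fin 4 → ℝ) (e1 e2 e3 e4 : Fin 4 → ℝ) :
    Qtvec F e3 e3 = (Em e1 e2 e3 e4 * Matrix.of (Qt F) * (Em e1 e2 e3 e4)ᵀ) 2 2 := by
  simp only [Qtvec, Em, Matrix.mul_apply, Matrix.transpose_apply, Matrix.of_apply, Fin.sum_univ_four, Matrix.cons_val_zero, Matrix.cons_val_one, Matrix.cons_val_two, Matrix.cons_val_three, Matrix.head_cons, Matrix.tail_cons, Matrix.cons_val', Matrix.empty_val', Matrix.cons_val_fin_one, Matrix.head_fin_const, Fin.zero_eta, Fin.mk_one, Fin.reduceFinMk, Matrix.smul_apply, Matrix.add_apply, Matrix.neg_apply, smul_eq_mul, Fin.reduceEq, reduceIte]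
  ring

set_option maxHeartbeats 1000000 in
lemma plumb44 (F : Fin 4 → Fin 4 → ℝ) (e1 e2 e3 e4 : Fin 4 → ℝ) :
    Qtvec F e4 e4 = (Em e1 e2 e3 e4 * Matrix.of (Qt F) * (Em e1 e2 e3 e4)ᵀ) 3 3 := by
  simp only [Qtvec, Em, Matrix.mul_apply, Matrix.transpose_apply, Matrix.of_apply, Fin.sum_univ_four, Matrix.cons_val_zero, Matrix.cons_val_one, Matrix.cons_val_two, Matrix.cons_val_three, Matrix.head_cons, Matrix.tail_cons, Matrix.cons_val', Matrix.empty_val', Matrix.cons_val_fin_one, Matrix.head_fin_const, Fin.zero_eta, Fin.mk_one, Fin.reduceFinMk, Matrix.smul_apply, Matrix.add_apply, Matrix.neg_apply, smul_eq_mul, Fin.reduceEq, reduceIte]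
  ring

set_option maxHeartbeats 1000000 in
lemma plumb34 (F : Fin 4 → Fin 4 → ℝ) (e1 e2 e3 e4 : Fin 4 → ℝ) :
    Qtvec F e3 e4 = (Em e1 e2 e3 e4 * Matrix.of (Qt F) * (Em e1 e2 e3 e4)ᵀ) 2 3 := by
  simp only [Qtvec, Em, Matrix.mul_apply, Matrix.transpose_apply, Matrix.of_apply, Fin.sum_univ_four, Matrix.cons_val_zero, Matrix.cons_val_one, Matrix.cons_val_two, Matrix.cons_val_three, Matrix.head_cons, Matrix.tail_cons, Matrix.cons_val', Matrix.empty_val', Matrix.cons_val_fin_one, Matrix.head_fin_const, Fin.zero_eta, Fin.mk_one, Fin.reduceFinMk, Matrix.smul_apply, Matrix.add_apply, Matrix.neg_apply, smul_eq_mul, Fin.reduceEq, reduceIte]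
  ring

lemma fvec13 (F : Fin 4 → Fin 4 → ℝ) (e1 e2 e3 e4 : Fin 4 → ℝ) :
    Fvec F e1 e3 = (Em e1 e2 e3 e4 * Matrix.of F * (Em e1 e2 e3 e4)ᵀ) 0 2 := by
  simp only [Fvec, Em, Matrix.mul_apply, Matrix.transpose_apply, Matrix.of_apply, Fin.sum_univ_four, Matrix.cons_val_zero, Matrix.cons_val_one, Matrix.cons_val_two, Matrix.cons_val_three, Matrix.head_cons, Matrix.tail_cons, Matrix.cons_val', Matrix.empty_val', Matrix.cons_val_fin_one, Matrix.head_fin_const, Fin.zero_eta, Fin.mk_one, Fin.reduceFinMk, Matrix.smul_apply, Matrix.add_apply, Matrix.neg_apply, smul_eq_mul, Fin.reduceEq, reduceIte]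
  ring

lemma fvec23 (F : Fin 4 → Fin 4 → ℝ) (e1 e2 e3 e4 : Fin 4 → ℝ) :
    Fvec F e2 e3 = (Em e1 e2 e3 e4 * Matrix.of F * (Em e1 e2 e3 e4)ᵀ) 1 2 := by
  simp only [Fvec, Em, Matrix.mul_apply, Matrix.transpose_apply, Matrix.of_apply, Fin.sum_univ_four, Matrix.cons_val_zero, Matrix.cons_val_one, Matrix.cons_val_two, Matrix.cons_val_three, Matrix.head_cons, Matrix.tail_cons, Matrix.cons_val', Matrix.empty_val', Matrix.cons_val_fin_one, Matrix.head_fin_const, Fin.zero_eta, Fin.mk_one, Fin.reduceFinMk, Matrix.smul_apply, Matrix.add_apply, Matrix.neg_apply, smul_eq_mul, Fin.reduceEq, reduceIte]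
  ring

lemma fvec14 (F : Fin 4 → Fin 4 → ℝ) (e1 e2 e3 e4 : Fin 4 → ℝ) :
    Fvec F e1 e4 = (Em e1 e2 e3 e4 * Matrix.of F * (Em e1 e2 e3 e4)ᵀ) 0 3 := by
  simp only [Fvec, Em, Matrix.mul_apply, Matrix.transpose_apply, Matrix.of_apply, Fin.sum_univ_four, Matrix.cons_val_zero, Matrix.cons_val_one, Matrix.cons_val_two, Matrix.cons_val_three, Matrix.head_cons, Matrix.tail_cons, Matrix.cons_val', Matrix.empty_val', Matrix.cons_val_fin_one, Matrix.head_fin_const, Fin.zero_eta, Fin.mk_one, Fin.reduceFinMk, Matrix.smul_apply, Matrix.add_apply, Matrix.neg_apply, smul_eq_mul, Fin.reduceEq, reduceIte]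
  ring

lemma fvec24 (F : Fin 4 → Fin 4 → ℝ) (e1 e2 e3 e4 : Fin 4 → ℝ) :
    Fvec F e2 e4 = (Em e1 e2 e3 e4 * Matrix.of F * (Em e1 e2 e3 e4)ᵀ) 1 3 := by
  simp only [Fvec, Em, Matrix.mul_apply, Matrix.transpose_apply, Matrix.of_apply, Fin.sum_univ_four, Matrix.cons_val_zero, Matrix.cons_val_one, Matrix.cons_val_two, Matrix.cons_val_three, Matrix.head_cons, Matrix.tail_cons, Matrix.cons_val', Matrix.empty_val', Matrix.cons_val_fin_one, Matrix.head_fin_const, Fin.zero_eta, Fin.mk_one, Fin.reduceFinMk, Matrix.smul_apply, Matrix.add_apply, Matrix.neg_apply, smul_eq_mul, Fin.reduceEq, reduceIte]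
  ring

lemma fvec34 (F : Fin 4 → Fin 4 → ℝ) (e1 e2 e3 e4 : Fin 4 → ℝ) :
    Fvec F e3 e4 = (Em e1 e2 e3 e4 * Matrix.of F * (Em e1 e2 e3 e4)ᵀ) 2 3 := by
  simp only [Fvec, Em, Matrix.mul_apply, Matrix.transpose_apply, Matrix.of_apply, Fin.sum_univ_four, Matrix.cons_val_zero, Matrix.cons_val_one, Matrix.cons_val_two, Matrix.cons_val_three, Matrix.head_cons, Matrix.tail_cons, Matrix.cons_val', Matrix.empty_val', Matrix.cons_val_fin_one, Matrix.head_fin_const, Fin.zero_eta, Fin.mk_one, Fin.reduceFinMk, Matrix.smul_apply, Matrix.add_apply, Matrix.neg_apply, smul_eq_mul, Fin.reduceEq, reduceIte]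
  ring

lemma fvec12 (F : Fin 4 → Fin 4 → ℝ) (e1 e2 e3 e4 : Fin 4 → ℝ) :
    Fvec F e1 e2 = (Em e1 e2 e3 e4 * Matrix.of F * (Em e1 e2 e3 e4)ᵀ) 0 1 := by
  simp only [Fvec, Em, Matrix.mul_apply, Matrix.transpose_apply, Matrix.of_apply, Fin.sum_univ_four, Matrix.cons_val_zero, Matrix.cons_val_one, Matrix.cons_val_two, Matrix.cons_val_three, Matrix.head_cons, Matrix.tail_cons, Matrix.cons_val', Matrix.empty_val', Matrix.cons_val_fin_one, Matrix.head_fin_const, Fin.zero_eta, Fin.mk_one, Fin.reduceFinMk, Matrix.smul_apply, Matrix.add_apply, Matrix.neg_apply, smul_eq_mul, Fin.reduceEq, reduceIte]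
  ring


set_option maxHeartbeats 4000000

/-- **Null components of the Maxwell energy–momentum tensor** (section 11.1
of the paper): relative to a positively oriented null frame `(e₁,e₂,e₃,e₄)`,
`Q̃[F](e₃,e₃) = 2·Σ_A F(e_A,e₃)²`, `Q̃[F](e₄,e₄) = 2·Σ_A F(e_A,e₄)²`, and
`Q̃[F](e₃,e₄) = (1/2)·F(e₃,e₄)² + 2·F(e₁,e₂)²`. -/
theorem maxwell_energy_momentum_null_components (F : Fin 4 → Fin 4 → ℝ)
    (hF : ∀ a b, F a b = - F b a)
    (e1 e2 e3 e4 : Fin 4 → ℝ) (hframe : IsNullFrame e1 e2 e3 e4) :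
    (Qtvec F e3 e3 = 2 * ((Fvec F e1 e3) ^ 2 + (Fvec F e2 e3) ^ 2)) ∧
    (Qtvec F e4 e4 = 2 * ((Fvec F e1 e4) ^ 2 + (Fvec F e2 e4) ^ 2)) ∧
    (Qtvec F e3 e4 = (1 / 2) * (Fvec F e3 e4) ^ 2 + 2 * (Fvec F e1 e2) ^ 2) := by
  obtain ⟨h11, h22, h12, h33, h44, h34, h13, h14, h23, h24, hor⟩ := hframe
  have hg := gram e1 e2 e3 e4 h11 h22 h12 h33 h44 h34 h13 h14 h23 h24
  have hH := Hexp e1 e2 e3 e4 hg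
  have hFanti : (Matrix.of F)ᵀ = -Matrix.of F := by
    ext a b
    simpa [Matrix.transpose_apply, Matrix.neg_apply] using hF b a
  set fm := Em e1 e2 e3 e4 * Matrix.of F * (Em e1 e2 e3 e4)ᵀ with hfm
  have hfmanti : fmᵀ = -fm := by
    rw [hfm]
    simp only [Matrix.transpose_mul, Matrix.transpose_transpose, hFanti, Matrix.neg_mul,
      Matrix.mul_neg, Matrix.mul_assoc]
  have hSd : Matrix.of (starF F)
      = dualM ((Em e1 e2 e3 e4)ᵀ * (Ginvm * fm * Ginvm) * Em e1 e2 e3 e4) := by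
    rw [Sm_eq F]
    congr 1
    rw [hfm, ← hH]
    simp only [Matrix.mul_assoc]
  have hsm : Em e1 e2 e3 e4 * Matrix.of (starF F) * (Em e1 e2 e3 e4)ᵀ
      = (2:ℝ) • Wmat (Ginvm * fm * Ginvm) := by
    rw [hSd, key, hor]
  have hmain : Em e1 e2 e3 e4 * Matrix.of (Qt F) * (Em e1 e2 e3 e4)ᵀ
      = fm * Ginvm * fmᵀ
        + ((2:ℝ) • Wmat (Ginvm * fm * Ginvm)) * Ginvm * ((2:ℝ) • Wmat (Ginvm * fm * Ginvm))ᵀ := by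
    rw [Qt_eq F, Matrix.mul_add, Matrix.add_mul, ← hsm, ← hH, hfm]
    congr 1 <;>
      simp only [Matrix.transpose_mul, Matrix.transpose_transpose, Matrix.mul_assoc]
  have d00 : fm 0 0 = 0 := by
    have h := congrFun (congrFun hfmanti 0) 0
    simp only [Matrix.transpose_apply, Matrix.neg_apply] at h
    linarith
  have a10 : fm 1 0 = -fm 0 1 := by
    have h := congrFun (congrFun hfmanti 0) 1
    simp only [Matrix.transpose_apply, Matrix.neg_apply] at h
    linarith
  have d11 : fm 1 1 = 0 := by
    have h := congrFun (congrFun hfmanti 1) 1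
    simp only [Matrix.transpose_apply, Matrix.neg_apply] at h
    linarith
  have a20 : fm 2 0 = -fm 0 2 := by
    have h := congrFun (congrFun hfmanti 0) 2
    simp only [Matrix.transpose_apply, Matrix.neg_apply] at h
    linarith
  have a21 : fm 2 1 = -fm 1 2 := by
    have h := congrFun (congrFun hfmanti 1) 2
    simp only [Matrix.transpose_apply, Matrix.neg_apply] at h
    linarith
  have d22 : fm 2 2 = 0 := by
    have h := congrFun (congrFun hfmanti 2) 2
    simp only [Matrix.transpose_apply, Matrix.neg_apply] at h
    linarith
  have a30 : fm 3 0 = -fm 0 3 := by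
    have h := congrFun (congrFun hfmanti 0) 3
    simp only [Matrix.transpose_apply, Matrix.neg_apply] at h
    linarith
  have a31 : fm 3 1 = -fm 1 3 := by
    have h := congrFun (congrFun hfmanti 1) 3
    simp only [Matrix.transpose_apply, Matrix.neg_apply] at h
    linarith
  have a32 : fm 3 2 = -fm 2 3 := by
    have h := congrFun (congrFun hfmanti 2) 3
    simp only [Matrix.transpose_apply, Matrix.neg_apply] at h
    linarith
  have d33 : fm 3 3 = 0 := by
    have h := congrFun (congrFun hfmanti 3) 3
    simp only [Matrix.transpose_apply, Matrix.neg_apply] at h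
    linarith
  refine ⟨?_, ?_, ?_⟩
  · rw [plumb33 F e1 e2 e3 e4, hmain, fvec13 F e1 e2 e3 e4, fvec23 F e1 e2 e3 e4, ← hfm]
    simp only [Wmat, Ginvm, Matrix.mul_apply, Matrix.transpose_apply, Matrix.of_apply, Fin.sum_univ_four, Matrix.cons_val_zero, Matrix.cons_val_one, Matrix.cons_val_two, Matrix.cons_val_three, Matrix.head_cons, Matrix.tail_cons, Matrix.cons_val', Matrix.empty_val', Matrix.cons_val_fin_one, Matrix.head_fin_const, Fin.zero_eta, Fin.mk_one, Fin.reduceFinMk, Matrix.smul_apply, Matrix.add_apply, Matrix.neg_apply, smul_eq_mul, Fin.reduceEq, reduceIte]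
    simp only [a10, a20, a21, a30, a31, a32, d00, d11, d22, d33]
    ring
  · rw [plumb44 F e1 e2 e3 e4, hmain, fvec14 F e1 e2 e3 e4, fvec24 F e1 e2 e3 e4, ← hfm]
    simp only [Wmat, Ginvm, Matrix.mul_apply, Matrix.transpose_apply, Matrix.of_apply, Fin.sum_univ_four, Matrix.cons_val_zero, Matrix.cons_val_one, Matrix.cons_val_two, Matrix.cons_val_three, Matrix.head_cons, Matrix.tail_cons, Matrix.cons_val', Matrix.empty_val', Matrix.cons_val_fin_one, Matrix.head_fin_const, Fin.zero_eta, Fin.mk_one, Fin.reduceFinMk, Matrix.smul_apply, Matrix.add_apply, Matrix.neg_apply, smul_eq_mul, Fin.reduceEq, reduceIte]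
    simp only [a10, a20, a21, a30, a31, a32, d00, d11, d22, d33]
    ring
  · rw [plumb34 F e1 e2 e3 e4, hmain, fvec34 F e1 e2 e3 e4, fvec12 F e1 e2 e3 e4, ← hfm]
    simp only [Wmat, Ginvm, Matrix.mul_apply, Matrix.transpose_apply, Matrix.of_apply, Fin.sum_univ_four, Matrix.cons_val_zero, Matrix.cons_val_one, Matrix.cons_val_two, Matrix.cons_val_three, Matrix.head_cons, Matrix.tail_cons, Matrix.cons_val', Matrix.empty_val', Matrix.cons_val_fin_one, Matrix.head_fin_const, Fin.zero_eta, Fin.mk_one, Fin.reduceFinMk, Matrix.smul_apply, Matrix.add_apply, Matrix.neg_apply, smul_eq_mul, Fin.reduceEq, reduceIte]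
    simp only [a10, a20, a21, a30, a31, a32, d00, d11, d22, d33]
    ring


end

end Paper
end
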